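/- arXiv:0805.3214 — 3 statements merged into one kernel-verified Lean document; each statement's English description precedes it below -/
import Mathlib

section
/- Let F be an algebraically closed field of characteristic zero, K = F(t), and let S be an element of the top field E of a root tower for some polynomial over K. Then for all but finitely many t_0 ∈ F, the evaluation S(t_0) is well defined; precisely, there is a finite set Δ ⊆ F such that S can be evaluated at every t_0 ∈ F \ Δ (interpreting each radical generator α_i with α_i^{ℓ_i} = a_i via evaluation of a_i at t_0 and choice of an ℓ_i-th root in F). -/
/-- A root tower over `K` inside an extension `E`. -/
structure RootTower (K E : Type*) [Field K] [Field E] [Algebra K E] where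
  r : ℕ
  step : Fin (r + 1) → IntermediateField K E
  first : step 0 = ⊥
  last : step (Fin.last r) = ⊤
  radical : ∀ i : Fin r, ∃ (ℓ : ℕ) (a : E), 0 < ℓ ∧ a ∈ step i.castSucc ∧ a ≠ 0 ∧
    step i.succ = step i.castSucc ⊔ IntermediateField.adjoin K {x : E | x ^ ℓ = a}

theorem RootTower.isIntegral' {K E : Type*} [Field K] [Field E] [Algebra K E]
    (T : RootTower K E) (S : E) : IsIntegral K S := by
  have key : ∀ i : Fin (T.r + 1), T.step i ≤ algebraicClosure K E := by
    intro i
    induction i using Fin.induction with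
    | zero => rw [T.first]; exact bot_le
    | succ i ih =>
      obtain ⟨ℓ, a, hℓ, ha, -, heq⟩ := T.radical i
      rw [heq]
      refine sup_le ih ?_
      rw [IntermediateField.adjoin_le_iff]
      intro x hx
      exact IsIntegral.of_pow hℓ (hx ▸ ih ha)
  have : S ∈ T.step (Fin.last T.r) := by rw [T.last]; trivial
  exact key _ this


set_option maxHeartbeats 1000000 in
set_option synthInstance.maxHeartbeats 400000 in
/-- Let `F` be algebraically closed of characteristic zero, `K = F(t)`, and let `S` be an
element of the top field `E` of a root tower over `K`. Then for all but finitely many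
`t₀ ∈ F`, `S(t₀)` is well defined: there is a finite set `Δ ⊆ F` such that for every
`t₀ ∉ Δ` there is a specialization, i.e. an `F`-algebra homomorphism `φ` from an
`F`-subalgebra `R` of `E` to `F` whose domain contains `t` and `S`, with `φ(t) = t₀`. -/
theorem root_tower_element_evaluable
    {F : Type*} [Field F] [IsAlgClosed F] [CharZero F]
    {E : Type*} [Field E] [Algebra F E] [Algebra (RatFunc F) E]
    [IsScalarTower F (RatFunc F) E]
    (T : RootTower (RatFunc F) E) (S : E) :
    ∃ Δ : Finset F, ∀ t₀ : F, t₀ ∉ Δ →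
      ∃ (R : Subalgebra F E) (φ : R →ₐ[F] F)
        (hX : algebraMap (RatFunc F) E RatFunc.X ∈ R) (hS : S ∈ R),
        φ ⟨algebraMap (RatFunc F) E RatFunc.X, hX⟩ = t₀ := by
  classical
  set K := RatFunc F
  set A := Polynomial F
  have hSint : IsIntegral K S := T.isIntegral' S
  letI : Algebra A E := ((algebraMap K E).comp (algebraMap A K)).toAlgebra
  haveI : IsScalarTower A K E := IsScalarTower.of_algebraMap_eq fun x => rfl
  have hinjKE : Function.Injective (algebraMap K E) := (algebraMap K E).injective
  have hinjAK : Function.Injective (algebraMap A K) := IsFractionRing.injective A K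
  have hinjAE : Function.Injective (algebraMap A E) := by
    rw [IsScalarTower.algebraMap_eq A K E]
    exact hinjKE.comp hinjAK
  have hSalg : IsAlgebraic A S :=
    (IsFractionRing.isAlgebraic_iff A K E).mpr hSint.isAlgebraic
  obtain ⟨u, d, hd0, hdu⟩ : ∃ (u : integralClosure A E) (d : A), d ≠ 0 ∧
      algebraMap A E d * S = u := by
    obtain ⟨d, hd0, hint⟩ := hSalg.exists_integral_multiple
    exact ⟨⟨d • S, hint⟩, d, hd0, (Algebra.smul_def d S).symm⟩
  refine ⟨d.roots.toFinset, ?_⟩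
  intro t₀ ht₀
  have hdt₀ : Polynomial.eval t₀ d ≠ 0 := by
    intro h
    exact ht₀ (Multiset.mem_toFinset.mpr ((Polynomial.mem_roots hd0).mpr h))
  -- Localization away from d
  set Aloc := Localization.Away d with hAlocdef
  have hdKunit : IsUnit (algebraMap A K d) := by
    refine isUnit_iff_ne_zero.mpr ?_
    simpa using fun h => hd0 (hinjAK (by simpa using h))
  have hdEunit : IsUnit (algebraMap A E d) := by
    refine isUnit_iff_ne_zero.mpr ?_
    simpa using fun h => hd0 (hinjAE (by simpa using h))
  letI : Algebra Aloc K := (IsLocalization.Away.lift d hdKunit).toAlgebra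
  letI : Algebra Aloc E := (IsLocalization.Away.lift d hdEunit).toAlgebra
  haveI : IsScalarTower A Aloc K :=
    IsScalarTower.of_algebraMap_eq fun x => (IsLocalization.Away.lift_eq d hdKunit x).symm
  haveI : IsScalarTower A Aloc E :=
    IsScalarTower.of_algebraMap_eq fun x => (IsLocalization.Away.lift_eq d hdEunit x).symm
  haveI : IsScalarTower Aloc K E := by
    refine IsScalarTower.of_algebraMap_eq' ?_
    refine IsLocalization.ringHom_ext (Submonoid.powers d) ?_
    rw [RingHom.comp_assoc, ← IsScalarTower.algebraMap_eq A Aloc K,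
      ← IsScalarTower.algebraMap_eq A Aloc E, IsScalarTower.algebraMap_eq A K E]
  have hFAE : algebraMap F E = (algebraMap A E).comp (algebraMap F A) := by
    rw [IsScalarTower.algebraMap_eq A K E, RingHom.comp_assoc,
      ← IsScalarTower.algebraMap_eq F A K, ← IsScalarTower.algebraMap_eq F K E]
  haveI : IsScalarTower F Aloc E := by
    refine IsScalarTower.of_algebraMap_eq' ?_
    rw [IsScalarTower.algebraMap_eq A Aloc E] at hFAE
    rw [hFAE, RingHom.comp_assoc, ← IsScalarTower.algebraMap_eq F A Aloc]
  have hple : Submonoid.powers d ≤ nonZeroDivisors A :=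
    powers_le_nonZeroDivisors_of_noZeroDivisors hd0
  haveI : IsDomain Aloc := IsLocalization.isDomain_localization hple
  haveI : IsIntegrallyClosed Aloc := isIntegrallyClosed_of_isLocalization (S := Aloc) (Submonoid.powers d) hple
  haveI : IsFractionRing Aloc K :=
    IsFractionRing.isFractionRing_of_isDomain_of_isLocalization (Submonoid.powers d) Aloc K
  -- the subalgebra C = Aloc[u]
  have huA : IsIntegral A (u : E) := u.2
  have huAloc : IsIntegral Aloc (u : E) := huA.tower_top
  set C : Subalgebra Aloc E := Algebra.adjoin Aloc {(u : E)} with hCdef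
  have hCint : ∀ x ∈ C, IsIntegral Aloc x := by
    intro x hx
    exact IsIntegral.of_mem_of_fg C huAloc.fg_adjoin_singleton x hx
  set tE : E := algebraMap K E RatFunc.X with htEdef
  have htEA : tE = algebraMap A E Polynomial.X := by
    rw [htEdef, IsScalarTower.algebraMap_apply A K E, RatFunc.algebraMap_X]
  have htEC : tE ∈ C := by
    rw [htEA, IsScalarTower.algebraMap_apply A Aloc E]
    exact Subalgebra.algebraMap_mem C _
  have hwdE : algebraMap Aloc E (IsLocalization.Away.invSelf d) * algebraMap A E d = 1 := by
    rw [IsScalarTower.algebraMap_apply A Aloc E, ← map_mul, mul_comm,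
      IsLocalization.Away.mul_invSelf, map_one]
  have hSC : S ∈ C := by
    have : S = algebraMap Aloc E (IsLocalization.Away.invSelf d) * (u : E) := by
      rw [← hdu, ← mul_assoc, hwdE, one_mul]
    rw [this]
    exact mul_mem (Subalgebra.algebraMap_mem C _) (Algebra.subset_adjoin rfl)
  -- elements of C
  set tEc : C := ⟨tE, htEC⟩ with htEcdef
  set t0c : C := algebraMap F C t₀ with ht0cdef
  have ht0cval : (t0c : E) = algebraMap F E t₀ := by
    rw [ht0cdef, IsScalarTower.algebraMap_apply F Aloc ↥C,
      IsScalarTower.algebraMap_apply F Aloc E]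
    simp
  have hFEt0 : algebraMap F E t₀ = algebraMap A E (Polynomial.C t₀) := by
    rw [hFAE, RingHom.comp_apply, Polynomial.algebraMap_eq]
  set kk : K := algebraMap A K (Polynomial.X - Polynomial.C t₀) with hkkdef
  have hkkne : kk ≠ 0 := by
    rw [hkkdef]
    intro h
    exact Polynomial.X_sub_C_ne_zero t₀ (hinjAK (by simpa using h))
  have hdiffval : ((tEc - t0c : C) : E) = algebraMap K E kk := by
    push_cast
    rw [ht0cval, show (tEc : E) = tE from rfl, htEA, hkkdef, hFEt0]
    simp [map_sub, ← IsScalarTower.algebraMap_apply A K E]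
  -- the span of tEc - t0c is a proper ideal
  have hne : Ideal.span {tEc - t0c} ≠ ⊤ := by
    intro htop
    have h1 : (1 : C) ∈ Ideal.span {tEc - t0c} := htop ▸ Submodule.mem_top
    obtain ⟨z, hz⟩ := Ideal.mem_span_singleton'.mp h1
    have hzE : (z : E) * algebraMap K E kk = 1 := by
      rw [← hdiffval]
      exact_mod_cast congrArg Subtype.val hz
    have hzinv : (z : E) = algebraMap K E kk⁻¹ := by
      rw [map_inv₀]
      exact eq_inv_of_mul_eq_one_right (by rw [mul_comm]; exact hzE)
    have hint : IsIntegral Aloc (kk⁻¹) := by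
      rw [← isIntegral_algebraMap_iff (A := K) (B := E) hinjKE, ← hzinv]
      exact hCint z z.2
    obtain ⟨y, hy⟩ := IsIntegrallyClosed.isIntegral_iff.mp hint
    obtain ⟨p, m, hm⟩ := IsLocalization.exists_mk'_eq (Submonoid.powers d) y
    obtain ⟨n, hn⟩ := m.2
    have hspec := IsLocalization.mk'_spec Aloc p m
    have hKeq := congrArg (algebraMap Aloc K) hspec
    rw [map_mul, hm, hy, ← IsScalarTower.algebraMap_apply A Aloc K,
      ← IsScalarTower.algebraMap_apply A Aloc K] at hKeq
    have hmK : algebraMap A K (m : A) = algebraMap A K p * kk := by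
      have h := congrArg (· * kk) hKeq
      rwa [mul_comm (kk⁻¹) _, mul_assoc, inv_mul_cancel₀ hkkne, mul_one] at h
    have hmain : algebraMap A K (m : A) = algebraMap A K (p * (Polynomial.X - Polynomial.C t₀)) := by
      rw [map_mul, ← hkkdef]
      exact hmK
    have hAeq : (m : A) = p * (Polynomial.X - Polynomial.C t₀) := hinjAK hmain
    rw [← hn] at hAeq
    simp only at hAeq
    have heval := congrArg (Polynomial.eval t₀) hAeq
    rw [Polynomial.eval_pow, Polynomial.eval_mul, Polynomial.eval_sub, Polynomial.eval_X,
      Polynomial.eval_C, sub_self, mul_zero] at heval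
    exact hdt₀ (pow_eq_zero_iff'.mp heval).1
  obtain ⟨mI, hmImax, hmIle⟩ := Ideal.exists_le_maximal _ hne
  haveI := hmImax
  letI : Field (↥C ⧸ mI) := Ideal.Quotient.field mI
  -- finite type instances
  haveI hft1 : Algebra.FiniteType F A := inferInstance
  haveI hft2 : Algebra.FiniteType A Aloc :=
    IsLocalization.finiteType_of_monoid_fg (Submonoid.powers d) Aloc
  haveI hft3 : Algebra.FiniteType F Aloc := Algebra.FiniteType.trans hft1 hft2
  haveI hft4 : Algebra.FiniteType Aloc C := (Subalgebra.fg_iff_finiteType C).mp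
    ⟨{(u : E)}, by rw [hCdef]; simp⟩
  haveI hft5 : Algebra.FiniteType F C := Algebra.FiniteType.trans hft3 hft4
  haveI : Algebra.FiniteType F (↥C ⧸ mI) :=
    Algebra.FiniteType.of_surjective (Ideal.Quotient.mkₐ F mI)
      (Ideal.Quotient.mkₐ_surjective F mI)
  haveI : Module.Finite F (↥C ⧸ mI) := finite_of_finite_type_of_isJacobsonRing F _
  haveI : Algebra.IsIntegral F (↥C ⧸ mI) := Algebra.IsIntegral.of_finite F _
  have hsurj : Function.Surjective (algebraMap F (↥C ⧸ mI)) :=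
    IsAlgClosed.algebraMap_bijective_of_isIntegral.2
  have hinj : Function.Injective (algebraMap F (↥C ⧸ mI)) := (algebraMap F _).injective
  let e : F ≃+* (↥C ⧸ mI) := RingEquiv.ofBijective (algebraMap F (↥C ⧸ mI)) ⟨hinj, hsurj⟩
  -- the subalgebra over F and its elements
  let j : (Subalgebra.restrictScalars F C) →+* ↥C :=
    { toFun := fun x => (⟨x.1, (Subalgebra.mem_restrictScalars F).mp x.2⟩ : C)
      map_one' := rfl
      map_mul' := fun _ _ => rfl
      map_zero' := rfl
      map_add' := fun _ _ => rfl }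
  let ψ : (Subalgebra.restrictScalars F C) →+* F :=
    e.symm.toRingHom.comp ((Ideal.Quotient.mk mI).comp j)
  have hcomm : ∀ x : F, ψ (algebraMap F (Subalgebra.restrictScalars F C) x) = x := by
    intro x
    have h1 : j (algebraMap F (Subalgebra.restrictScalars F C) x) = algebraMap F ↥C x :=
      Subtype.ext rfl
    show e.symm (Ideal.Quotient.mk mI (j (algebraMap F (Subalgebra.restrictScalars F C) x))) = x
    rw [h1, Ideal.Quotient.mk_algebraMap]
    exact e.symm_apply_apply x
  have hX : algebraMap K E RatFunc.X ∈ Subalgebra.restrictScalars F C :=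
    (Subalgebra.mem_restrictScalars F).mpr htEC
  have hS' : S ∈ Subalgebra.restrictScalars F C := (Subalgebra.mem_restrictScalars F).mpr hSC
  refine ⟨Subalgebra.restrictScalars F C, { toRingHom := ψ, commutes' := hcomm }, hX, hS', ?_⟩
  have hmk : Ideal.Quotient.mk mI (⟨tE, htEC⟩ : C) = algebraMap F (↥C ⧸ mI) t₀ := by
    rw [← Ideal.Quotient.mk_algebraMap, Ideal.Quotient.eq]
    have hsub : (⟨tE, htEC⟩ : C) - algebraMap F ↥C t₀ = tEc - t0c := by
      rw [htEcdef, ht0cdef]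
    rw [hsub]
    exact hmIle (Ideal.subset_span rfl)
  show e.symm (Ideal.Quotient.mk mI (j ⟨tE, hX⟩)) = t₀
  have hj : j ⟨tE, hX⟩ = (⟨tE, htEC⟩ : C) := rfl
  rw [hj, hmk]
  exact e.symm_apply_apply t₀
end

section
/- Being parametrizable by radicals is a birational invariant: if two irreducible affine curves C and C* over an algebraically closed field F of characteristic zero are birationally equivalent, then C is parametrizable by radicals if and only if C* is parametrizable by radicals. -/
/-- The affine plane curve `f = 0` is parametrizable by radicals: there is a finite,
nonempty family of square parametrizations `P i ∈ E² \ F²`, with `E` the top of a root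
tower over `F(t)`, such that (1) each `P i` satisfies the equation of the curve, and
(2) all but finitely many points of the curve are obtained from some `P i` by a
specialization homomorphism fixing `F` (evaluation at some `t₀ ∈ F`). -/
def RadicalParametrization {F : Type} [Field F] (f : MvPolynomial (Fin 2) F) : Prop :=
  ∃ (E : Type) (_ : Field E) (_ : Algebra (RatFunc F) E) (_ : RootTower (RatFunc F) E)
    (n : ℕ) (P : Fin n → Fin 2 → E), 0 < n ∧
    (∀ i, ¬ ∀ j, ∃ c : F, P i j = algebraMap (RatFunc F) E (algebraMap F (RatFunc F) c)) ∧
    (∀ i, MvPolynomial.eval₂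
      ((algebraMap (RatFunc F) E).comp (algebraMap F (RatFunc F))) (P i) f = 0) ∧
    ∃ Δ : Finset (F × F), ∀ a : Fin 2 → F,
      MvPolynomial.eval a f = 0 → (a 0, a 1) ∉ Δ →
        ∃ (i : Fin n) (R : Subring E) (φ : R →+* F),
          (∀ c : F, ∃ h : algebraMap (RatFunc F) E (algebraMap F (RatFunc F) c) ∈ R,
            φ ⟨_, h⟩ = c) ∧
          (∀ j, ∃ h : P i j ∈ R, φ ⟨P i j, h⟩ = a j)

namespace RadAux
open MvPolynomial

variable {F : Type} [Field F]

theorem finSuccEquiv_rename_succ (r : MvPolynomial (Fin 1) F) :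
    finSuccEquiv F 1 (rename Fin.succ r) = Polynomial.C r := by
  induction r using MvPolynomial.induction_on with
  | C a =>
      rw [rename_C]
      rw [show (C a : MvPolynomial (Fin 2) F) = algebraMap F _ a from rfl]
      rw [AlgEquiv.commutes]
      rfl
  | add p q hp hq => rw [map_add, map_add, hp, hq, map_add]
  | mul_X p i hp => rw [map_mul, map_mul, hp, rename_X, finSuccEquiv_X_succ, map_mul]

theorem exists_elim (f h : MvPolynomial (Fin 2) F) (hf : Irreducible f) (hdvd : ¬ f ∣ h) :
    ∃ r : MvPolynomial (Fin 1) F, r ≠ 0 ∧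
      ∃ a b : MvPolynomial (Fin 2) F, rename Fin.succ r = a * f + b * h := by
  classical
  set R := MvPolynomial (Fin 1) F with hR
  letI : NormalizationMonoid R := UniqueFactorizationMonoid.normalizationMonoid.toNormalizationMonoid
  letI : NormalizedGCDMonoid R := UniqueFactorizationMonoid.toNormalizedGCDMonoid R
  set e := finSuccEquiv F 1 with he
  have hf0 : f ≠ 0 := hf.ne_zero
  have hh0 : h ≠ 0 := fun h0 => hdvd (h0 ▸ dvd_zero f)
  have hf'0 : e f ≠ 0 := fun h0 => hf0 (by simpa using congrArg e.symm h0)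
  have hh'0 : e h ≠ 0 := fun h0 => hh0 (by simpa using congrArg e.symm h0)
  have hf' : Irreducible (e f) := (MulEquiv.irreducible_iff e.toMulEquiv).mpr hf
  have hdvd' : ¬ e f ∣ e h := by
    rintro ⟨c, hc⟩
    exact hdvd ⟨e.symm c, by apply e.injective; rw [map_mul, hc, AlgEquiv.apply_symm_apply]⟩
  rcases Nat.eq_zero_or_pos (e f).natDegree with hdeg | hdeg
  · obtain ⟨γ, hγ⟩ := Polynomial.natDegree_eq_zero.mp hdeg
    refine ⟨γ, fun h0 => hf'0 (by rw [← hγ, h0, map_zero]), 1, 0, ?_⟩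
    have : rename Fin.succ γ = f := by
      apply e.injective
      rw [finSuccEquiv_rename_succ, hγ]
    rw [this]; ring
  · -- `e f` is primitive
    have hprim : (e f).IsPrimitive := by
      intro c hc
      obtain ⟨d, hd⟩ := hc
      rcases hf'.isUnit_or_isUnit hd with h1 | h1
      · exact Polynomial.isUnit_C.mp h1
      · exfalso
        have h2 : (e f).natDegree = 0 := by
          rw [hd]
          have := Polynomial.natDegree_mul_le (p := (Polynomial.C c)) (q := d)
          have h3 : d.natDegree = 0 := Polynomial.natDegree_eq_zero_of_isUnit h1
          simpa [h3] using this
        omega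
    set K := FractionRing R with hK
    set φK := algebraMap R K with hφK
    have hinj : Function.Injective φK := IsFractionRing.injective R K
    have hirr'' : Irreducible ((e f).map φK) :=
      (hprim.irreducible_iff_irreducible_map_fraction_map (K := K)).mp hf'
    have hdvd'' : ¬ (e f).map φK ∣ (e h).map φK := by
      intro hdv
      have hpr : Prime ((e f).map φK) := hirr''.prime
      have hfac : (e h).map φK =
          Polynomial.C (φK (e h).content) * ((e h).primPart.map φK) := by
        conv_lhs => rw [(e h).eq_C_content_mul_primPart]
        rw [Polynomial.map_mul, Polynomial.map_C]
      rw [hfac] at hdv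
      rcases hpr.dvd_mul.mp hdv with h1 | h1
      · have hcne : φK (e h).content ≠ 0 := fun h0 =>
          (fun hc0 => hh'0 (Polynomial.content_eq_zero_iff.mp hc0))
            (hinj (by simpa using h0))
        exact hirr''.not_isUnit (isUnit_of_dvd_unit h1 (Polynomial.isUnit_C.mpr (isUnit_iff_ne_zero.mpr hcne)))
      · have h2 : e f ∣ (e h).primPart :=
          hprim.dvd_of_fraction_map_dvd_fraction_map (K := K) h1
        exact hdvd' (h2.trans (e h).primPart_dvd)
    obtain ⟨u, v, huv⟩ := hirr''.coprime_iff_not_dvd.mpr hdvd''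
    obtain ⟨b, hb⟩ := IsLocalization.integerNormalization_map_to_map (nonZeroDivisors R) u
    obtain ⟨c, hc⟩ := IsLocalization.integerNormalization_map_to_map (nonZeroDivisors R) v
    rw [← algebraMap_smul K (b : R) u, Polynomial.smul_eq_C_mul] at hb
    rw [← algebraMap_smul K (c : R) v, Polynomial.smul_eq_C_mul] at hc
    set u₀ := IsLocalization.integerNormalization (nonZeroDivisors R) u with hu₀
    set v₀ := IsLocalization.integerNormalization (nonZeroDivisors R) v with hv₀
    have key : (Polynomial.C ((b : R) * (c : R)) : Polynomial R) =
        (Polynomial.C (c : R) * u₀) * e f + (Polynomial.C (b : R) * v₀) * e h := by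
      apply Polynomial.map_injective φK hinj
      rw [Polynomial.map_add, Polynomial.map_mul, Polynomial.map_mul, Polynomial.map_mul,
        Polynomial.map_mul, Polynomial.map_C, Polynomial.map_C, Polynomial.map_C, hb, hc]
      rw [map_mul]
      calc Polynomial.C (φK b * φK c) = (Polynomial.C (φK b) * Polynomial.C (φK c)) *
            (u * Polynomial.map φK (e f) + v * Polynomial.map φK (e h)) := by rw [huv, map_mul]; ring
        _ = _ := by ring
    refine ⟨(b : R) * (c : R),
      mul_ne_zero (nonZeroDivisors.coe_ne_zero b) (nonZeroDivisors.coe_ne_zero c),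
      e.symm (Polynomial.C (c : R) * u₀), e.symm (Polynomial.C (b : R) * v₀), ?_⟩
    apply e.injective
    rw [finSuccEquiv_rename_succ, key]
    simp only [map_add, map_mul, AlgEquiv.apply_symm_apply]

variable [IsAlgClosed F] {E : Type} [Field E]

theorem eq_const_of_root (c : F →+* E) (x : E) (r : MvPolynomial (Fin 1) F) (hr : r ≠ 0)
    (hroot : MvPolynomial.eval₂ c (fun _ => x) r = 0) : ∃ a : F, x = c a := by
  classical
  letI : Algebra F E := c.toAlgebra
  set ε : MvPolynomial (Fin 1) F →ₐ[F] Polynomial F :=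
    (Polynomial.mapAlgHom (MvPolynomial.isEmptyAlgEquiv F (Fin 0)).toAlgHom).comp
      (MvPolynomial.finSuccEquiv F 0).toAlgHom with hε
  have hεinj : Function.Injective ε := by
    rw [hε]
    refine Function.Injective.comp (g := (Polynomial.mapAlgHom
        (MvPolynomial.isEmptyAlgEquiv F (Fin 0)).toAlgHom)) ?_
      (MvPolynomial.finSuccEquiv F 0).injective
    exact Polynomial.map_injective _ (MvPolynomial.isEmptyAlgEquiv F (Fin 0)).injective
  have hkey : ∀ p : MvPolynomial (Fin 1) F,
      Polynomial.aeval x (ε p) = MvPolynomial.aeval (fun _ : Fin 1 => x) p := by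
    intro p
    have := MvPolynomial.algHom_ext (f := (Polynomial.aeval x).comp ε)
      (g := MvPolynomial.aeval (fun _ : Fin 1 => x)) (fun i => ?_)
    · exact congrFun (congrArg DFunLike.coe this) p
    · have h0 : i = 0 := Subsingleton.elim i 0
      subst h0
      simp [hε, MvPolynomial.finSuccEquiv_X_zero]
  have halg : IsAlgebraic F x := by
    refine ⟨ε r, fun h0 => hr (hεinj (by simpa using h0)), ?_⟩
    rw [hkey]
    rw [MvPolynomial.aeval_def]
    exact hroot
  have hint : IsIntegral F x := halg.isIntegral
  have hirr : Irreducible (minpoly F x) := minpoly.irreducible hint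
  have hdeg : (minpoly F x).degree = 1 := IsAlgClosed.degree_eq_one_of_irreducible F hirr
  have hmonic := minpoly.monic hint
  have hnd : (minpoly F x).natDegree = 1 := Polynomial.natDegree_eq_of_degree_eq_some hdeg
  have hcoeff1 : (minpoly F x).coeff 1 = 1 := by
    have := hmonic.leadingCoeff
    rwa [Polynomial.leadingCoeff, hnd] at this
  have heq : minpoly F x = Polynomial.C ((minpoly F x).coeff 1) * Polynomial.X +
      Polynomial.C ((minpoly F x).coeff 0) :=
    Polynomial.eq_X_add_C_of_degree_le_one hdeg.le
  have := minpoly.aeval F x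
  rw [heq, hcoeff1] at this
  simp only [map_add, map_mul, Polynomial.aeval_C, Polynomial.aeval_X, map_one, one_mul] at this
  refine ⟨-((minpoly F x).coeff 0), ?_⟩
  have hx : x = -(algebraMap F E ((minpoly F x).coeff 0)) := by
    rw [eq_neg_iff_add_eq_zero]; exact this
  exact hx.trans (by rw [map_neg]; rfl)

theorem unit_cofactor (g : MvPolynomial (Fin 2) F) (hgu : ¬ IsUnit g) (c : F)
    (p : MvPolynomial (Fin 2) F) (hp : X 0 - C c = p * g) : IsUnit p := by
  classical
  set e := finSuccEquiv F 1 with he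
  have hC : e (C c) = Polynomial.C (C c) := by
    rw [← rename_C (Fin.succ) c, finSuccEquiv_rename_succ]
  have hmain : (Polynomial.X - Polynomial.C (C c) : Polynomial (MvPolynomial (Fin 1) F))
      = e p * e g := by
    rw [← map_mul, ← hp, map_sub, hC, finSuccEquiv_X_zero]
  have hne : (Polynomial.X - Polynomial.C (C c) : Polynomial (MvPolynomial (Fin 1) F)) ≠ 0 :=
    Polynomial.X_sub_C_ne_zero _
  have hp0 : e p ≠ 0 := fun h0 => hne (by rw [hmain, h0, zero_mul])
  have hg0 : e g ≠ 0 := fun h0 => hne (by rw [hmain, h0, mul_zero])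
  have hdeg : (e p).natDegree + (e g).natDegree = 1 := by
    rw [← Polynomial.natDegree_mul hp0 hg0, ← hmain, Polynomial.natDegree_X_sub_C]
  have hcoeff : ((Polynomial.X - Polynomial.C (C c) :
      Polynomial (MvPolynomial (Fin 1) F))).coeff 1 = 1 := by
    simp [Polynomial.coeff_sub]
  rcases Nat.eq_zero_or_pos (e g).natDegree with h0 | hpos
  · exfalso
    obtain ⟨γ, hγ⟩ := Polynomial.natDegree_eq_zero.mp h0
    apply hgu
    have hunit : IsUnit γ := by
      apply IsUnit.of_mul_eq_one (a := γ) ((e p).coeff 1)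
      rw [hmain, ← hγ, Polynomial.coeff_mul_C] at hcoeff
      rw [mul_comm]; exact hcoeff
    have : IsUnit (e g) := hγ ▸ Polynomial.isUnit_C.mpr hunit
    have := this.map e.symm.toRingEquiv.toRingHom
    simpa using this
  · have hdp : (e p).natDegree = 0 := by omega
    obtain ⟨δ, hδ⟩ := Polynomial.natDegree_eq_zero.mp hdp
    have hunit : IsUnit δ := by
      apply IsUnit.of_mul_eq_one (a := δ) ((e g).coeff 1)
      rw [hmain, ← hδ, Polynomial.coeff_C_mul] at hcoeff
      exact hcoeff
    have : IsUnit (e p) := hδ ▸ Polynomial.isUnit_C.mpr hunit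
    have := this.map e.symm.toRingEquiv.toRingHom
    simpa using this

theorem not_both_lines (g : MvPolynomial (Fin 2) F) (hg : Irreducible g) (c0 c1 : F)
    (h0 : g ∣ X 0 - C c0) (h1 : g ∣ X 1 - C c1) : False := by
  classical
  obtain ⟨p, hp⟩ := h0
  obtain ⟨q, hq⟩ := h1
  have hpu : IsUnit p := unit_cofactor g hg.not_isUnit c0 p (by rw [hp, mul_comm])
  set sw := renameEquiv F (Equiv.swap (0 : Fin 2) 1) with hsw
  have hqu : IsUnit q := by
    have hswg : ¬ IsUnit (sw g) := by
      intro hu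
      exact hg.not_isUnit (by simpa using hu.map sw.symm.toRingEquiv.toRingHom)
    have heq : X 0 - C c1 = sw q * sw g := by
      have := congrArg sw hq
      rw [map_sub, map_mul] at this
      simp only [hsw, renameEquiv_apply, rename_X, rename_C] at this ⊢
      rw [Equiv.swap_apply_right] at this
      rw [this]; ring
    have := unit_cofactor (sw g) hswg c1 (sw q) heq
    have := this.map sw.symm.toRingEquiv.toRingHom
    simpa using this
  -- evaluate at the point (c0 + 1, c1)
  set a : Fin 2 → F := fun j => if j = 0 then c0 + 1 else c1 with ha
  have hkey : (X 0 - C c0) * q = (X 1 - C c1) * p := by rw [hp, hq]; ring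
  have := congrArg (MvPolynomial.eval a) hkey
  rw [map_mul, map_mul, map_sub, map_sub, eval_X, eval_X, eval_C, eval_C] at this
  have ha0 : a 0 = c0 + 1 := by simp [ha]
  have ha1 : a 1 = c1 := by simp [ha]
  rw [ha0, ha1] at this
  simp only [add_sub_cancel_left, sub_self, zero_mul, one_mul] at this
  have : IsUnit (0 : F) := by
    rw [← this]
    exact hqu.map (MvPolynomial.eval a)
  exact not_isUnit_zero this

theorem ker_eval (c : F →+* E) (f : MvPolynomial (Fin 2) F) (hf : Irreducible f)
    (P : Fin 2 → E) (hev : MvPolynomial.eval₂ c P f = 0)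
    (hnc : ¬ ∀ j, ∃ a : F, P j = c a) :
    RingHom.ker (MvPolynomial.eval₂Hom c P) = Ideal.span {f} := by
  classical
  refine le_antisymm ?_ ?_
  swap
  · rw [Ideal.span_le]
    intro y hy
    rw [Set.mem_singleton_iff] at hy
    subst hy
    exact hev
  intro x hx
  rw [RingHom.mem_ker] at hx
  by_contra hxs
  have hndvd : ¬ f ∣ x := fun hd => hxs (Ideal.mem_span_singleton.mpr hd)
  apply hnc
  intro j
  -- two cases according to the variable
  have key : ∀ (f' x' : MvPolynomial (Fin 2) F) (Q : Fin 2 → E), Irreducible f' → ¬ f' ∣ x' →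
      MvPolynomial.eval₂ c Q f' = 0 → MvPolynomial.eval₂ c Q x' = 0 → ∃ a : F, Q 1 = c a := by
    intro f' x' Q hf' hndvd' hev' hx'
    obtain ⟨r, hr, a, b, hab⟩ := exists_elim f' x' hf' hndvd'
    have h0 : MvPolynomial.eval₂ c Q (rename Fin.succ r) = 0 := by
      rw [hab]
      simp only [eval₂_add, eval₂_mul, hev', hx', mul_zero, add_zero]
    rw [eval₂_rename] at h0
    have hcomp : (Q ∘ Fin.succ : Fin 1 → E) = fun _ => Q 1 := by
      funext i
      have : i = 0 := Subsingleton.elim i 0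
      subst this
      rfl
    rw [hcomp] at h0
    exact eq_const_of_root c (Q 1) r hr h0
  fin_cases j
  · -- variable 0 : apply key with swapped polynomials and values
    set sw : MvPolynomial (Fin 2) F ≃ₐ[F] MvPolynomial (Fin 2) F :=
      renameEquiv F (Equiv.swap (0 : Fin 2) 1) with hswdef
    have hswirr : Irreducible (sw f) := (MulEquiv.irreducible_iff sw.toMulEquiv).mpr hf
    have hswdvd : ¬ sw f ∣ sw x := by
      rintro ⟨d, hd⟩
      exact hndvd ⟨sw.symm d, by apply sw.injective; rw [map_mul, hd, AlgEquiv.apply_symm_apply]⟩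
    have hevsw : ∀ y : MvPolynomial (Fin 2) F,
        MvPolynomial.eval₂ c (P ∘ Equiv.swap (0 : Fin 2) 1) (sw y) = MvPolynomial.eval₂ c P y := by
      intro y
      simp only [hswdef, renameEquiv_apply]
      rw [eval₂_rename]
      congr 1
      funext i
      simp [Function.comp, Equiv.swap_apply_self]
    obtain ⟨a, hA⟩ := key (sw f) (sw x) (P ∘ Equiv.swap (0 : Fin 2) 1) hswirr hswdvd
      (by rw [hevsw]; exact hev) (by rw [hevsw]; exact hx)
    refine ⟨a, ?_⟩
    simpa [Equiv.swap_apply_right] using hA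
  · exact key f x P hf hndvd hev hx

set_option maxHeartbeats 1000000 in
set_option synthInstance.maxHeartbeats 400000 in
theorem transfer {F : Type} [Field F] [IsAlgClosed F]
    (f g : MvPolynomial (Fin 2) F) (hf : Irreducible f) (hg : Irreducible g)
    [hfp : (Ideal.span {f}).IsPrime] [hgp : (Ideal.span {g}).IsPrime]
    (φ : FractionRing (MvPolynomial (Fin 2) F ⧸ Ideal.span {f}) ≃ₐ[F]
         FractionRing (MvPolynomial (Fin 2) F ⧸ Ideal.span {g}))
    {E : Type} [Field E] [Algebra (RatFunc F) E]
    {n : ℕ} (P : Fin n → Fin 2 → E) (hn : 0 < n)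
    (hnc : ∀ i, ¬ ∀ j, ∃ c : F, P i j = algebraMap (RatFunc F) E (algebraMap F (RatFunc F) c))
    (hev : ∀ i, MvPolynomial.eval₂
      ((algebraMap (RatFunc F) E).comp (algebraMap F (RatFunc F))) (P i) f = 0) :
    ∃ Q : Fin 2 → E,
      (¬ ∀ j, ∃ c : F, Q j = algebraMap (RatFunc F) E (algebraMap F (RatFunc F) c)) ∧
      (MvPolynomial.eval₂
        ((algebraMap (RatFunc F) E).comp (algebraMap F (RatFunc F))) Q g = 0) ∧
      (∀ a : Fin 2 → F, MvPolynomial.eval a g = 0 →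
        ∃ (R : Subring E) (ψ : R →+* F),
          (∀ c : F, ∃ h : algebraMap (RatFunc F) E (algebraMap F (RatFunc F) c) ∈ R,
            ψ ⟨_, h⟩ = c) ∧
          (∀ j, ∃ h : Q j ∈ R, ψ ⟨Q j, h⟩ = a j)) := by
  classical
  set c : F →+* E := (algebraMap (RatFunc F) E).comp (algebraMap F (RatFunc F)) with hc
  set i : Fin n := ⟨0, hn⟩ with hi
  have hker : RingHom.ker (MvPolynomial.eval₂Hom c (P i)) = Ideal.span {f} :=
    ker_eval c f hf (P i) (hev i) (hnc i)
  have hliftzero : ∀ a : MvPolynomial (Fin 2) F, a ∈ Ideal.span {f} →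
      MvPolynomial.eval₂Hom c (P i) a = 0 := fun a ha => by rw [← hker] at ha; exact ha
  set μ : (MvPolynomial (Fin 2) F ⧸ Ideal.span {f}) →+* E :=
    Ideal.Quotient.lift (Ideal.span {f}) (MvPolynomial.eval₂Hom c (P i)) hliftzero with hμ
  have hμinj : Function.Injective μ :=
    RingHom.lift_injective_of_ker_le_ideal _ hliftzero hker.le
  set ψf : FractionRing (MvPolynomial (Fin 2) F ⧸ Ideal.span {f}) →+* E :=
    IsFractionRing.lift hμinj with hψf
  set ψ : FractionRing (MvPolynomial (Fin 2) F ⧸ Ideal.span {g}) →+* E :=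
    ψf.comp φ.symm.toAlgHom.toRingHom with hψ
  set Q : Fin 2 → E := fun j =>
    ψ (algebraMap (MvPolynomial (Fin 2) F ⧸ Ideal.span {g}) _
      (Ideal.Quotient.mk (Ideal.span {g}) (X j))) with hQ
  have hμC : ∀ a : F, μ (Ideal.Quotient.mk (Ideal.span {f}) (MvPolynomial.C a)) = c a := by
    intro a
    rw [hμ, Ideal.Quotient.lift_mk]
    simp
  have htowf : ∀ a : F,
      algebraMap F (FractionRing (MvPolynomial (Fin 2) F ⧸ Ideal.span {f})) a =
        algebraMap (MvPolynomial (Fin 2) F ⧸ Ideal.span {f})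
          (FractionRing (MvPolynomial (Fin 2) F ⧸ Ideal.span {f}))
          (Ideal.Quotient.mk (Ideal.span {f}) (MvPolynomial.C a)) := by
    intro a
    rw [IsScalarTower.algebraMap_apply F (MvPolynomial (Fin 2) F ⧸ Ideal.span {f})
      (FractionRing (MvPolynomial (Fin 2) F ⧸ Ideal.span {f})),
      IsScalarTower.algebraMap_apply F (MvPolynomial (Fin 2) F)
        (MvPolynomial (Fin 2) F ⧸ Ideal.span {f}),
      Ideal.Quotient.algebraMap_eq, MvPolynomial.algebraMap_eq]
  have htowg : ∀ a : F,
      algebraMap F (FractionRing (MvPolynomial (Fin 2) F ⧸ Ideal.span {g})) a =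
        algebraMap (MvPolynomial (Fin 2) F ⧸ Ideal.span {g})
          (FractionRing (MvPolynomial (Fin 2) F ⧸ Ideal.span {g}))
          (Ideal.Quotient.mk (Ideal.span {g}) (MvPolynomial.C a)) := by
    intro a
    rw [IsScalarTower.algebraMap_apply F (MvPolynomial (Fin 2) F ⧸ Ideal.span {g})
      (FractionRing (MvPolynomial (Fin 2) F ⧸ Ideal.span {g})),
      IsScalarTower.algebraMap_apply F (MvPolynomial (Fin 2) F)
        (MvPolynomial (Fin 2) F ⧸ Ideal.span {g}),
      Ideal.Quotient.algebraMap_eq, MvPolynomial.algebraMap_eq]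
  have hconst : ∀ a : F,
      ψ (algebraMap F (FractionRing (MvPolynomial (Fin 2) F ⧸ Ideal.span {g})) a) = c a := by
    intro a
    have h1 : ψ (algebraMap F (FractionRing (MvPolynomial (Fin 2) F ⧸ Ideal.span {g})) a) =
        ψf (algebraMap F (FractionRing (MvPolynomial (Fin 2) F ⧸ Ideal.span {f})) a) := by
      rw [hψ]
      simp only [RingHom.coe_comp, Function.comp_apply]
      exact congrArg ψf (φ.symm.commutes a)
    rw [h1, htowf, hψf, IsFractionRing.lift_algebraMap]
    exact hμC a
  have hhom : MvPolynomial.eval₂Hom c Q =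
      ψ.comp ((algebraMap (MvPolynomial (Fin 2) F ⧸ Ideal.span {g})
        (FractionRing (MvPolynomial (Fin 2) F ⧸ Ideal.span {g}))).comp
          (Ideal.Quotient.mk (Ideal.span {g}))) := by
    apply MvPolynomial.ringHom_ext
    · intro a
      simp only [eval₂Hom_C, RingHom.coe_comp, Function.comp_apply]
      rw [← htowg]
      exact (hconst a).symm
    · intro j
      simp only [eval₂Hom_X', RingHom.coe_comp, Function.comp_apply]
      rfl
  have hmkinj : ∀ x : MvPolynomial (Fin 2) F,
      ψ.comp ((algebraMap (MvPolynomial (Fin 2) F ⧸ Ideal.span {g})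
        (FractionRing (MvPolynomial (Fin 2) F ⧸ Ideal.span {g}))).comp
          (Ideal.Quotient.mk (Ideal.span {g}))) x = 0 ↔ x ∈ Ideal.span {g} := by
    intro x
    simp only [RingHom.coe_comp, Function.comp_apply]
    constructor
    · intro h0
      have h1 := ψ.injective (h0.trans (map_zero ψ).symm)
      have h2 := IsFractionRing.injective (MvPolynomial (Fin 2) F ⧸ Ideal.span {g})
        (FractionRing (MvPolynomial (Fin 2) F ⧸ Ideal.span {g}))
        (h1.trans (map_zero _).symm)
      exact Ideal.Quotient.eq_zero_iff_mem.mp h2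
    · intro h0
      rw [Ideal.Quotient.eq_zero_iff_mem.mpr h0, map_zero, map_zero]
  have hkerQ : RingHom.ker (MvPolynomial.eval₂Hom c Q) = Ideal.span {g} := by
    ext x
    rw [RingHom.mem_ker, hhom]
    exact hmkinj x
  have hQval : ∀ j, Q j = MvPolynomial.eval₂Hom c Q (X j) := by
    intro j; rw [eval₂Hom_X']
  refine ⟨Q, ?_, ?_, ?_⟩
  · -- nonconstancy
    intro hall
    have hdvd : ∀ j : Fin 2, ∃ a : F, g ∣ X j - MvPolynomial.C a := by
      intro j
      obtain ⟨a, ha⟩ := hall j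
      refine ⟨a, ?_⟩
      rw [← Ideal.mem_span_singleton, ← hmkinj (X j - MvPolynomial.C a)]
      simp only [RingHom.coe_comp, Function.comp_apply, map_sub]
      have hXj : ψ (algebraMap (MvPolynomial (Fin 2) F ⧸ Ideal.span {g})
          (FractionRing (MvPolynomial (Fin 2) F ⧸ Ideal.span {g}))
          (Ideal.Quotient.mk (Ideal.span {g}) (X j))) = c a := ha
      have hCa : ψ (algebraMap (MvPolynomial (Fin 2) F ⧸ Ideal.span {g})
          (FractionRing (MvPolynomial (Fin 2) F ⧸ Ideal.span {g}))
          (Ideal.Quotient.mk (Ideal.span {g}) (MvPolynomial.C a))) = c a := by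
        rw [← htowg]
        exact hconst a
      rw [hXj, hCa, sub_self]
    obtain ⟨a0, h0⟩ := hdvd 0
    obtain ⟨a1, h1⟩ := hdvd 1
    exact not_both_lines g hg a0 a1 h0 h1
  · -- evaluation
    have h0 : MvPolynomial.eval₂Hom c Q g = 0 := by
      rw [hhom]
      simp only [RingHom.coe_comp, Function.comp_apply]
      have hg0 : Ideal.Quotient.mk (Ideal.span {g}) g = 0 :=
        Ideal.Quotient.eq_zero_iff_mem.mpr (Ideal.subset_span (Set.mem_singleton g))
      rw [hg0, map_zero, map_zero]
    exact h0
  · -- specialization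
    intro a hag
    have hsub : ∀ x ∈ RingHom.ker (MvPolynomial.eval₂Hom c Q), MvPolynomial.eval a x = 0 := by
      intro x hx
      rw [hkerQ, Ideal.mem_span_singleton] at hx
      obtain ⟨d, rfl⟩ := hx
      rw [map_mul, hag, zero_mul]
    set ψs : (MvPolynomial.eval₂Hom c Q).range →+* F :=
      (Ideal.Quotient.lift (RingHom.ker (MvPolynomial.eval₂Hom c Q))
        (MvPolynomial.eval a) hsub).comp
        (RingHom.quotientKerEquivRange (MvPolynomial.eval₂Hom c Q)).symm.toRingHom with hψs
    have hkeyval : ∀ p : MvPolynomial (Fin 2) F,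
        ∀ hmem : MvPolynomial.eval₂Hom c Q p ∈ (MvPolynomial.eval₂Hom c Q).range,
        ψs ⟨MvPolynomial.eval₂Hom c Q p, hmem⟩ = MvPolynomial.eval a p := by
      intro p hmem
      have h1 : (RingHom.quotientKerEquivRange (MvPolynomial.eval₂Hom c Q))
          (Ideal.Quotient.mk (RingHom.ker (MvPolynomial.eval₂Hom c Q)) p)
          = ⟨MvPolynomial.eval₂Hom c Q p, hmem⟩ := by
        apply Subtype.ext
        rfl
      rw [hψs]
      simp only [RingHom.coe_comp, Function.comp_apply, RingEquiv.toRingHom_eq_coe,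
        RingEquiv.coe_toRingHom]
      rw [← h1, RingEquiv.symm_apply_apply, Ideal.Quotient.lift_mk]
    refine ⟨(MvPolynomial.eval₂Hom c Q).range, ψs, ?_, ?_⟩
    · intro cc
      have hval : (c cc : E) = MvPolynomial.eval₂Hom c Q (MvPolynomial.C cc) := by
        rw [eval₂Hom_C]
      have hmem : algebraMap (RatFunc F) E (algebraMap F (RatFunc F) cc) ∈
          (MvPolynomial.eval₂Hom c Q).range := ⟨MvPolynomial.C cc, hval.symm⟩
      refine ⟨hmem, ?_⟩
      have heq : (⟨algebraMap (RatFunc F) E (algebraMap F (RatFunc F) cc), hmem⟩ :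
          (MvPolynomial.eval₂Hom c Q).range) =
          ⟨MvPolynomial.eval₂Hom c Q (MvPolynomial.C cc), RingHom.mem_range_self _ _⟩ :=
        Subtype.ext hval
      rw [heq, hkeyval]
      simp
    · intro j
      have hmem : Q j ∈ (MvPolynomial.eval₂Hom c Q).range := ⟨X j, (hQval j).symm⟩
      refine ⟨hmem, ?_⟩
      have heq : (⟨Q j, hmem⟩ : (MvPolynomial.eval₂Hom c Q).range) =
          ⟨MvPolynomial.eval₂Hom c Q (X j), RingHom.mem_range_self _ _⟩ := Subtype.ext (hQval j)
      rw [heq, hkeyval]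
      simp

end RadAux


/-- Radical parametrizability is a birational invariant: if `C : f = 0` and `C* : g = 0`
are irreducible affine plane curves over an algebraically closed field `F` of
characteristic zero which are birationally equivalent (i.e. their function fields are
isomorphic as `F`-algebras), then `C` is parametrizable by radicals if and only if `C*`
is. -/
theorem radicalParametrization_birational_invariant
    {F : Type} [Field F] [IsAlgClosed F] [CharZero F]
    (f g : MvPolynomial (Fin 2) F) (hf : Irreducible f) (hg : Irreducible g)
    [hfp : (Ideal.span {f}).IsPrime] [hgp : (Ideal.span {g}).IsPrime]
    (φ : FractionRing (MvPolynomial (Fin 2) F ⧸ Ideal.span {f}) ≃ₐ[F]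
         FractionRing (MvPolynomial (Fin 2) F ⧸ Ideal.span {g})) :
    RadicalParametrization f ↔ RadicalParametrization g := by
  constructor
  · intro hpf
    obtain ⟨E, fE, aE, tow, n, P, hn, hnc, hev, -⟩ := hpf
    letI := fE
    letI := aE
    obtain ⟨Q, hQnc, hQev, hQspec⟩ := RadAux.transfer f g hf hg φ P hn hnc hev
    refine ⟨E, fE, aE, tow, 1, fun _ => Q, Nat.one_pos, fun _ => hQnc, fun _ => hQev,
      ∅, fun a ha _ => ?_⟩
    obtain ⟨R, ψ, h1, h2⟩ := hQspec a ha
    exact ⟨0, R, ψ, h1, h2⟩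
  · intro hpg
    obtain ⟨E, fE, aE, tow, n, P, hn, hnc, hev, -⟩ := hpg
    letI := fE
    letI := aE
    obtain ⟨Q, hQnc, hQev, hQspec⟩ := RadAux.transfer g f hg hf φ.symm P hn hnc hev
    refine ⟨E, fE, aE, tow, 1, fun _ => Q, Nat.one_pos, fun _ => hQnc, fun _ => hQev,
      ∅, fun a ha _ => ?_⟩
    obtain ⟨R, ψ, h1, h2⟩ := hQspec a ha
    exact ⟨0, R, ψ, h1, h2⟩
end

section
/- Offsets preserve radical parametrizability: let C be an irreducible plane curve over an algebraically closed field F of characteristic zero that is parametrizable by radicals, and let d ∈ F \ {0}. If (R₁, R₂) is a square parametrization lying in the top field E of a root tower over F(t), then the offset components O^± = (R₁ ∓ d·R₂'/√(R₁'² + R₂'²), R₂ ± d·R₁'/√(R₁'² + R₂'²)) are square parametrizations, lying in the top field of the root tower extended by one square root (of a = R₁'² + R₂'²), provided a ≠ 0. -/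
open Polynomial IntermediateField

lemma mem_range_of_pow_eq_one {F E' : Type*} [Field F] [IsAlgClosed F] [Field E'] [Algebra F E']
    (u : E') (n : ℕ) (hn : 0 < n) (hu : u ^ n = 1) : ∃ c : F, algebraMap F E' c = u := by
  set p : F[X] := X ^ n - 1 with hp
  have hp0 : p ≠ 0 := by
    intro h
    have := congrArg (Polynomial.eval 0) h
    simp [hp, zero_pow hn.ne'] at this
  have hsp : Splits p := IsAlgClosed.splits p
  have hfac := Splits.eq_prod_roots hsp
  have h0 : (Polynomial.aeval u) p = 0 := by
    simp [hp, hu]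
  rw [hfac] at h0
  rw [map_mul, aeval_C, map_multiset_prod, Multiset.map_map] at h0
  rcases mul_eq_zero.mp h0 with h | h
  · exact absurd h (by simp [leadingCoeff_ne_zero.mpr hp0])
  · obtain ⟨c, hc, hc0⟩ := Multiset.mem_map.mp (Multiset.prod_eq_zero_iff.mp h)
    refine ⟨c, ?_⟩
    simp only [Function.comp_apply, map_sub, aeval_X, aeval_C] at hc0
    exact (sub_eq_zero.mp hc0).symm

lemma exists_tower_sqrt {F : Type} [Field F] [IsAlgClosed F] [CharZero F]
    {E : Type} [Field E] [Algebra F E] [Algebra (RatFunc F) E] [IsScalarTower F (RatFunc F) E]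
    (T : RootTower (RatFunc F) E) (a : E) (ha : a ≠ 0) :
    ∃ (E' : Type) (_ : Field E') (_ : Algebra (RatFunc F) E')
      (_ : RootTower (RatFunc F) E') (ι : E →ₐ[RatFunc F] E') (s : E'),
      s ^ 2 = ι a := by
  by_cases hsq : ∃ s : E, s ^ 2 = a
  · obtain ⟨s, hs⟩ := hsq
    exact ⟨E, inferInstance, inferInstance, T, AlgHom.id _ _, s, hs⟩
  push_neg at hsq
  set f : E[X] := X ^ 2 - C a with hf
  have hirr : Irreducible f := X_pow_sub_C_irreducible_of_prime Nat.prime_two hsq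
  haveI : Fact (Irreducible f) := ⟨hirr⟩
  set E' := AdjoinRoot f with hE'
  letI : Algebra (RatFunc F) E' := ((AdjoinRoot.of f).comp (algebraMap (RatFunc F) E)).toAlgebra
  set ι : E →ₐ[RatFunc F] E' := { AdjoinRoot.of f with commutes' := fun r => rfl } with hι
  set s : E' := AdjoinRoot.root f with hs
  have hs2 : s ^ 2 = ι a := by
    show s ^ 2 = AdjoinRoot.of f a
    exact root_X_pow_sub_C_pow 2 a
  -- roots of unity lie in the bottom field of E'
  have hunity : ∀ (u : E') (n : ℕ), 0 < n → u ^ n = 1 →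
      ∃ k : RatFunc F, algebraMap (RatFunc F) E' k = u := by
    intro u n hn hu
    letI : Algebra F E' := ((algebraMap (RatFunc F) E').comp (algebraMap F (RatFunc F))).toAlgebra
    obtain ⟨c, hc⟩ := mem_range_of_pow_eq_one (F := F) u n hn hu
    exact ⟨algebraMap F (RatFunc F) c, hc⟩
  -- the extended tower
  have hstep : ∀ i : Fin (T.r + 2), True := fun _ => trivial
  refine ⟨E', inferInstance, inferInstance, ?_, ι, s, hs2⟩
  refine
    { r := T.r + 1
      step := fun i => if h : (i : ℕ) ≤ T.r then
          (T.step ⟨i, Nat.lt_succ_of_le h⟩).map ι else ⊤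
      first := ?_
      last := ?_
      radical := ?_ }
  · beta_reduce
    have h0 : ((0 : Fin (T.r + 2)) : ℕ) ≤ T.r := by simp
    rw [dif_pos h0]
    have : (⟨((0 : Fin (T.r + 2)) : ℕ), Nat.lt_succ_of_le h0⟩ : Fin (T.r + 1)) = 0 := by
      ext; simp
    rw [this, T.first, IntermediateField.map_bot]
  · beta_reduce
    have : ¬ ((Fin.last (T.r + 1) : Fin (T.r + 2)) : ℕ) ≤ T.r := by simp
    rw [dif_neg this]
  · intro i
    by_cases hi : (i : ℕ) < T.r
    · -- old radical steps
      obtain ⟨ℓ, b, hℓ, hb, hb0, hstep⟩ := T.radical ⟨i, hi⟩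
      have hic : ((i.castSucc : Fin (T.r + 2)) : ℕ) ≤ T.r := le_of_lt (by simpa using hi)
      have his : ((i.succ : Fin (T.r + 2)) : ℕ) ≤ T.r := by simpa using hi
      have hcast : (⟨((i.castSucc : Fin (T.r + 2)) : ℕ), Nat.lt_succ_of_le hic⟩ : Fin (T.r + 1))
          = (⟨(i : ℕ), hi⟩ : Fin T.r).castSucc := by ext; simp
      have hsucc : (⟨((i.succ : Fin (T.r + 2)) : ℕ), Nat.lt_succ_of_le his⟩ : Fin (T.r + 1))
          = (⟨(i : ℕ), hi⟩ : Fin T.r).succ := by ext; simp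
      by_cases hroot : ∃ ρ : E, ρ ^ ℓ = b
      · obtain ⟨ρ, hρ⟩ := hroot
        refine ⟨ℓ, ι b, hℓ, ?_, ?_, ?_⟩
        · beta_reduce
          rw [dif_pos hic, hcast]
          exact ⟨b, hb, rfl⟩
        · simpa using (map_ne_zero ι).mpr hb0
        · beta_reduce
          rw [dif_pos hic, dif_pos his, hcast, hsucc, hstep, IntermediateField.map_sup,
            IntermediateField.adjoin_map]
          refine le_antisymm (sup_le_sup_left (IntermediateField.adjoin.mono _ _ _ ?_) _) ?_
          · rintro x ⟨y, hy, rfl⟩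
            show (ι y) ^ ℓ = ι b
            rw [← map_pow, hy]
          · refine sup_le le_sup_left ?_
            rw [IntermediateField.adjoin_le_iff]
            intro x hx
            have hx' : x ^ ℓ = ι b := hx
            have hρ0 : ρ ≠ 0 := by
              rintro rfl
              exact hb0 (by simpa [zero_pow hℓ.ne'] using hρ.symm)
            have hιρ0 : ι ρ ≠ 0 := (map_ne_zero ι).mpr hρ0
            have hu : (x / ι ρ) ^ ℓ = 1 := by
              rw [div_pow, ← map_pow, hρ, hx', div_self ((map_ne_zero ι).mpr hb0)]
            obtain ⟨k, hk⟩ := hunity (x / ι ρ) ℓ hℓ hu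
            have hxeq : x = algebraMap (RatFunc F) E' k * ι ρ := by
              rw [hk, div_mul_cancel₀ _ hιρ0]
            rw [hxeq]
            refine mul_mem (IntermediateField.algebraMap_mem _ _) ?_
            exact le_sup_right (α := IntermediateField (RatFunc F) E')
              (IntermediateField.subset_adjoin _ _ ⟨ρ, hρ, rfl⟩)
      · -- no root in E: the old step was trivial
        push_neg at hroot
        have htriv : T.step (⟨(i : ℕ), hi⟩ : Fin T.r).succ
            = T.step (⟨(i : ℕ), hi⟩ : Fin T.r).castSucc := by
          rw [hstep]
          have : {x : E | x ^ ℓ = b} = (∅ : Set E) := by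
            ext x; simpa using hroot x
          rw [this, IntermediateField.adjoin_empty, sup_bot_eq]
        refine ⟨1, 1, one_pos, one_mem _, one_ne_zero, ?_⟩
        beta_reduce
        rw [dif_pos hic, dif_pos his, hcast, hsucc, htriv]
        have hset : {x : E' | x ^ 1 = 1} = ({1} : Set E') := by
          ext x; simp
        rw [hset]
        have : IntermediateField.adjoin (RatFunc F) ({1} : Set E') ≤
            ((T.step (⟨(i : ℕ), hi⟩ : Fin T.r).castSucc).map ι) := by
          rw [IntermediateField.adjoin_le_iff]
          rintro x rfl
          exact one_mem _
        exact (sup_eq_left.mpr this).symm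
    · -- the new final step
      have hieq : (i : ℕ) = T.r := by omega
      have hic : ((i.castSucc : Fin (T.r + 2)) : ℕ) ≤ T.r := by simp [hieq]
      have his : ¬ ((i.succ : Fin (T.r + 2)) : ℕ) ≤ T.r := by simp [hieq]
      have hcast : (⟨((i.castSucc : Fin (T.r + 2)) : ℕ), Nat.lt_succ_of_le hic⟩ : Fin (T.r + 1))
          = Fin.last T.r := by ext; simp [hieq]
      refine ⟨2, ι a, two_pos, ?_, ?_, ?_⟩
      · beta_reduce
        rw [dif_pos hic, hcast, T.last]
        exact ⟨a, trivial, rfl⟩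
      · simpa using (map_ne_zero ι).mpr ha
      · beta_reduce
        rw [dif_pos hic, dif_neg his, hcast, T.last]
        refine le_antisymm ?_ le_top
        intro z _
        have hz : z ∈ Algebra.adjoin E ({AdjoinRoot.root f} : Set E') := by
          rw [AdjoinRoot.adjoinRoot_eq_top]; trivial
        refine Algebra.adjoin_induction ?_ ?_ ?_ ?_ hz
        · rintro x rfl
          refine le_sup_right (α := IntermediateField (RatFunc F) E')
            (IntermediateField.subset_adjoin _ _ ?_)
          exact hs2
        · intro r
          exact le_sup_left (α := IntermediateField (RatFunc F) E') ⟨r, trivial, rfl⟩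
        · intro x y _ _ hx hy; exact add_mem hx hy
        · intro x y _ _ hx hy; exact mul_mem hx hy

/-- Offsets preserve radical parametrizability (key computational step): if `(R₁, R₂)` is
a square parametrization with entries in the top field `E` of a root tower over
`K = F(t)`, `D` is the extension of `d/dt` to `E`, `a = R₁'² + R₂'² ≠ 0` and `d ≠ 0`,
then there is a root tower over `K` with top field `E'` containing `E` (via an embedding
`ι`) together with a square root `s` of `ι a`, and the offset components
`O^± = (ι R₁ ∓ d·ι R₂'/s, ι R₂ ± d·ι R₁'/s)` lie in `E'²`. -/
theorem offset_square_parametrization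
    {F : Type} [Field F] [IsAlgClosed F] [CharZero F]
    {E : Type} [Field E] [Algebra F E] [Algebra (RatFunc F) E]
    [IsScalarTower F (RatFunc F) E]
    (T : RootTower (RatFunc F) E)
    (D : Derivation F E E)
    (hD : ∀ p : Polynomial F,
      D (algebraMap (RatFunc F) E (algebraMap (Polynomial F) (RatFunc F) p)) =
        algebraMap (RatFunc F) E
          (algebraMap (Polynomial F) (RatFunc F) (Polynomial.derivative p)))
    (R₁ R₂ : E) (d : F) (hd : d ≠ 0)
    (ha : D R₁ ^ 2 + D R₂ ^ 2 ≠ 0) :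
    ∃ (E' : Type) (_ : Field E') (_ : Algebra (RatFunc F) E')
      (_ : RootTower (RatFunc F) E') (ι : E →ₐ[RatFunc F] E') (s : E'),
      s ≠ 0 ∧ s ^ 2 = ι (D R₁ ^ 2 + D R₂ ^ 2) ∧
      ∃ O₁p O₂p O₁m O₂m : E',
        O₁p = ι R₁ - algebraMap (RatFunc F) E' (algebraMap F (RatFunc F) d) * ι (D R₂) / s ∧
        O₂p = ι R₂ + algebraMap (RatFunc F) E' (algebraMap F (RatFunc F) d) * ι (D R₁) / s ∧
        O₁m = ι R₁ + algebraMap (RatFunc F) E' (algebraMap F (RatFunc F) d) * ι (D R₂) / s ∧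
        O₂m = ι R₂ - algebraMap (RatFunc F) E' (algebraMap F (RatFunc F) d) * ι (D R₁) / s := by
  obtain ⟨E', instF, instA, T', ι, s, hs2⟩ := exists_tower_sqrt T (D R₁ ^ 2 + D R₂ ^ 2) ha
  refine ⟨E', instF, instA, T', ι, s, ?_, hs2, _, _, _, _, rfl, rfl, rfl, rfl⟩
  intro h
  rw [h, zero_pow (two_ne_zero)] at hs2
  exact (map_ne_zero ι).mpr ha hs2.symm
end
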